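/- With f as above, f(κ) = 16πκ + (20π² − 4(π−ℓ₃)²)κ² + O(κ³) as κ → 0⁺; in particular f(κ) > 0 for all sufficiently small κ > 0, and f(κ) → +∞ as κ → ∞. -/
import Mathlib

open Real Filter Asymptotics

private lemma expTaylor (b : ℝ) :
    (fun κ : ℝ => exp (b * κ) - (1 + b * κ + b ^ 2 * κ ^ 2 / 2)) =O[nhds 0]
      fun κ => κ ^ 3 := by
  rw [Asymptotics.isBigO_iff]
  refine ⟨(|b| + 1) ^ 3, ?_⟩
  have hb : (0:ℝ) < |b| + 1 := by positivity
  filter_upwards [Metric.eventually_nhds_iff.2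
    ⟨1 / (|b| + 1), by positivity, fun {κ} h => h⟩] with κ hκ
  rw [Real.dist_eq, sub_zero] at hκ
  have hbk : |b * κ| ≤ 1 := by
    rw [abs_mul]
    calc |b| * |κ| ≤ |b| * (1 / (|b| + 1)) :=
          mul_le_mul_of_nonneg_left hκ.le (abs_nonneg b)
      _ ≤ 1 := by rw [mul_one_div, div_le_one hb]; linarith
  have hsum : ∑ m ∈ Finset.range 3, (b * κ) ^ m / (Nat.factorial m : ℝ)
      = 1 + b * κ + b ^ 2 * κ ^ 2 / 2 := by
    simp [Finset.sum_range_succ, Nat.factorial]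
    ring
  have := Real.exp_bound hbk (n := 3) (by norm_num)
  rw [hsum] at this
  have h1 : |b * κ| ^ 3 * ((3:ℕ).succ / ((Nat.factorial 3 : ℝ) * 3))
      ≤ (|b| + 1) ^ 3 * |κ| ^ 3 := by
    have : |b * κ| ^ 3 ≤ (|b| + 1) ^ 3 * |κ| ^ 3 := by
      rw [← mul_pow]
      refine pow_le_pow_left₀ (abs_nonneg _) ?_ 3
      rw [abs_mul]
      exact mul_le_mul_of_nonneg_right (by linarith) (abs_nonneg κ)
    calc |b * κ| ^ 3 * ((3:ℕ).succ / ((Nat.factorial 3 : ℝ) * 3))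
        ≤ |b * κ| ^ 3 * 1 := by
          apply mul_le_mul_of_nonneg_left _ (by positivity)
          norm_num [Nat.factorial]
      _ ≤ (|b| + 1) ^ 3 * |κ| ^ 3 := by rw [mul_one]; exact this
  calc ‖exp (b * κ) - (1 + b * κ + b ^ 2 * κ ^ 2 / 2)‖
      ≤ (|b| + 1) ^ 3 * |κ| ^ 3 := le_trans this h1
    _ = (|b| + 1) ^ 3 * ‖κ ^ 3‖ := by rw [norm_pow]; rfl

set_option maxHeartbeats 1000000 in
theorem f_asymptotics
    (ℓ ℓ₃ : ℝ) (hℓ : 0 < ℓ) (hℓ₃ : 0 < ℓ₃) (hℓ₃' : ℓ₃ < 2 * π)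
    (f : ℝ → ℝ)
    (hf : ∀ κ, f κ = exp (2 * π * κ) * (κ^2 * ℓ^2 - 3)^2
        + 8 * (κ^2 * ℓ^2 - 1)
        + (κ^2 * ℓ^2 + 1)^2 * (exp (-(2 * π * κ)) - 2 * cosh (2 * κ * (π - ℓ₃)))) :
    ((fun κ => f κ - (16 * π * κ + (20 * π^2 - 4 * (π - ℓ₃)^2) * κ^2))
        =O[nhdsWithin 0 (Set.Ioi 0)] (fun κ => κ^3)) ∧
    (∃ κ₀ > 0, ∀ κ, 0 < κ → κ < κ₀ → f κ > 0) ∧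
    Tendsto f atTop atTop := by
  have hπ := Real.pi_pos
  -- the key algebraic decomposition
  have key : ∀ κ : ℝ, f κ - (16 * π * κ + (20 * π^2 - 4 * (π - ℓ₃)^2) * κ^2)
      = κ ^ 3 * (-16 * π * ℓ^2 - (8 * π^2 + 2 * (2 * (π - ℓ₃))^2) * ℓ^2 * κ
          + (4 * π^2 - (2 * (π - ℓ₃))^2) * ℓ^4 * κ^3)
      + (κ^2 * ℓ^2 - 3)^2 *
          (exp (2 * π * κ) - (1 + 2 * π * κ + (2 * π)^2 * κ^2 / 2))
      + (κ^2 * ℓ^2 + 1)^2 *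
          (exp (-(2 * π) * κ) - (1 + -(2 * π) * κ + (-(2 * π))^2 * κ^2 / 2))
      - (κ^2 * ℓ^2 + 1)^2 *
          (exp (2 * (π - ℓ₃) * κ) - (1 + 2 * (π - ℓ₃) * κ + (2 * (π - ℓ₃))^2 * κ^2 / 2))
      - (κ^2 * ℓ^2 + 1)^2 *
          (exp (-(2 * (π - ℓ₃)) * κ)
            - (1 + -(2 * (π - ℓ₃)) * κ + (-(2 * (π - ℓ₃)))^2 * κ^2 / 2)) := by
    intro κ
    rw [hf, Real.cosh_eq,
      show (2 * κ * (π - ℓ₃)) = 2 * (π - ℓ₃) * κ from by ring,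
      show -(2 * (π - ℓ₃) * κ) = -(2 * (π - ℓ₃)) * κ from by ring,
      show -(2 * π * κ) = -(2 * π) * κ from by ring]
    ring
  -- big-O over nhds 0
  have hbig : (fun κ => f κ - (16 * π * κ + (20 * π^2 - 4 * (π - ℓ₃)^2) * κ^2))
      =O[nhds 0] fun κ => κ ^ 3 := by
    have hO1 : ∀ g : ℝ → ℝ, Continuous g → g =O[nhds (0:ℝ)] (fun _ => (1:ℝ)) :=
      fun g hg => (hg.tendsto 0).isBigO_one ℝ
    have hpoly : (fun κ : ℝ => κ ^ 3 * (-16 * π * ℓ^2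
        - (8 * π^2 + 2 * (2 * (π - ℓ₃))^2) * ℓ^2 * κ
        + (4 * π^2 - (2 * (π - ℓ₃))^2) * ℓ^4 * κ^3)) =O[nhds 0] fun κ => κ ^ 3 := by
      exact ((isBigO_refl (fun κ : ℝ => κ ^ 3) (nhds 0)).mul
        (hO1 _ (by continuity))).congr (fun x => rfl) (fun x => mul_one _)
    have hQ1 : (fun κ : ℝ => (κ^2 * ℓ^2 - 3)^2) =O[nhds (0:ℝ)] (fun _ => (1:ℝ)) :=
      hO1 _ (by continuity)
    have hQ2 : (fun κ : ℝ => (κ^2 * ℓ^2 + 1)^2) =O[nhds (0:ℝ)] (fun _ => (1:ℝ)) :=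
      hO1 _ (by continuity)
    have hm : ∀ (Q : ℝ → ℝ), Q =O[nhds (0:ℝ)] (fun _ => (1:ℝ)) → ∀ b : ℝ,
        (fun κ : ℝ => Q κ * (exp (b * κ) - (1 + b * κ + b^2 * κ^2 / 2)))
          =O[nhds 0] fun κ => κ ^ 3 := by
      intro Q hQ b
      exact (hQ.mul (expTaylor b)).congr (fun x => rfl) (fun x => one_mul _)
    have h1 := hm _ hQ1 (2 * π)
    have h2 := hm _ hQ2 (-(2 * π))
    have h3 := hm _ hQ2 (2 * (π - ℓ₃))
    have h4 := hm _ hQ2 (-(2 * (π - ℓ₃)))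
    have := ((((hpoly.add h1).add h2).sub h3).sub h4)
    refine this.congr' (Filter.Eventually.of_forall fun κ => ?_) EventuallyEq.rfl
    exact (key κ).symm
  refine ⟨hbig.mono nhdsWithin_le_nhds, ?_, ?_⟩
  · -- positivity for small κ
    obtain ⟨C, hC⟩ := Asymptotics.isBigO_iff.1 hbig
    obtain ⟨ε, hε, hball⟩ := Metric.eventually_nhds_iff.1 hC
    set C' := |C| with hC'
    have hC'0 : 0 ≤ C' := abs_nonneg C
    refine ⟨min ε (min 1 (16 * π / (C' + 1))), by positivity, fun κ hκ0 hκ => ?_⟩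
    have hκε : κ < ε := lt_of_lt_of_le hκ (min_le_left _ _)
    have hκ1 : κ < 1 := lt_of_lt_of_le hκ ((min_le_right _ _).trans (min_le_left _ _))
    have hκπ : κ < 16 * π / (C' + 1) :=
      lt_of_lt_of_le hκ ((min_le_right _ _).trans (min_le_right _ _))
    have hg : |f κ - (16 * π * κ + (20 * π^2 - 4 * (π - ℓ₃)^2) * κ^2)| ≤ C' * κ ^ 3 := by
      have := hball (y := κ) (by rw [Real.dist_eq, sub_zero, abs_of_pos hκ0]; exact hκε)
      calc |f κ - (16 * π * κ + (20 * π^2 - 4 * (π - ℓ₃)^2) * κ^2)|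
          ≤ C * ‖κ ^ 3‖ := this
        _ ≤ C' * κ ^ 3 := by
            rw [Real.norm_eq_abs, abs_of_pos (by positivity : (0:ℝ) < κ ^ 3)]
            exact mul_le_mul_of_nonneg_right (le_abs_self C) (by positivity)
    have hgl : -(C' * κ ^ 3) ≤ f κ - (16 * π * κ + (20 * π^2 - 4 * (π - ℓ₃)^2) * κ^2) :=
      neg_le_of_abs_le hg
    have hc : 0 < 20 * π^2 - 4 * (π - ℓ₃)^2 := by
      nlinarith [mul_pos hℓ₃ (show (0:ℝ) < 2 * π - ℓ₃ by linarith), sq_nonneg π]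
    have hκπ' : κ * (C' + 1) < 16 * π := (lt_div_iff₀ (by positivity)).1 hκπ
    have h3 : κ ^ 3 ≤ κ ^ 2 := pow_le_pow_of_le_one hκ0.le hκ1.le (by norm_num)
    have h3' : C' * κ ^ 3 ≤ C' * κ ^ 2 := mul_le_mul_of_nonneg_left h3 hC'0
    have h5 : C' * κ < 16 * π := by linarith
    have h4 : C' * κ ^ 2 < 16 * π * κ := by
      have := mul_lt_mul_of_pos_right h5 hκ0
      calc C' * κ ^ 2 = C' * κ * κ := by ring
        _ < 16 * π * κ := this
    have h6 : 0 ≤ (20 * π^2 - 4 * (π - ℓ₃)^2) * κ ^ 2 :=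
      mul_nonneg hc.le (sq_nonneg κ)
    linarith
  · -- tendsto atTop
    set a := |π - ℓ₃| with ha_def
    have ha : a < π := abs_lt.2 ⟨by linarith, by linarith⟩
    have ha0 : 0 ≤ a := abs_nonneg _
    have hgt : Tendsto (fun κ : ℝ => 8 * (κ^2 * ℓ^2 - 1)) atTop atTop := by
      apply Filter.Tendsto.const_mul_atTop (by norm_num : (0:ℝ) < 8)
      apply tendsto_atTop_add_const_right
      exact (tendsto_pow_atTop (by norm_num : 2 ≠ 0)).atTop_mul_const (by positivity)
    refine tendsto_atTop_mono' _ ?_ hgt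
    rw [Filter.EventuallyLE, Filter.eventually_atTop]
    refine ⟨max (2 / ℓ) (max 1 (Real.log 50 / (2 * (π - a)))), fun κ hκ => ?_⟩
    have hκ1 : (1:ℝ) ≤ κ := le_trans (le_max_left _ _) (le_trans (le_max_right _ _) hκ)
    have hκ0 : 0 < κ := by linarith
    have hu : 4 ≤ κ^2 * ℓ^2 := by
      have h2l : 2 / ℓ ≤ κ := le_trans (le_max_left _ _) hκ
      have : 2 ≤ κ * ℓ := by
        rw [div_le_iff₀ hℓ] at h2l
        linarith
      nlinarith
    have hF : (50:ℝ) ≤ exp (2 * (π - a) * κ) := by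
      have hlog : Real.log 50 / (2 * (π - a)) ≤ κ :=
        le_trans (le_max_right _ _) (le_trans (le_max_right _ _) hκ)
      have hpa : 0 < 2 * (π - a) := by linarith
      rw [div_le_iff₀ hpa] at hlog
      calc (50:ℝ) = exp (Real.log 50) := (Real.exp_log (by norm_num)).symm
        _ ≤ exp (2 * (π - a) * κ) := Real.exp_le_exp.2 (by linarith)
    have hsplit : exp (2 * π * κ) = exp (2 * a * κ) * exp (2 * (π - a) * κ) := by
      rw [← Real.exp_add]
      congr 1
      ring
    have hcosh : cosh (2 * κ * (π - ℓ₃)) ≤ exp (2 * a * κ) := by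
      have habs : |2 * κ * (π - ℓ₃)| = 2 * a * κ := by
        rw [abs_mul, abs_mul, abs_of_nonneg (by norm_num : (0:ℝ) ≤ 2),
          abs_of_pos hκ0, ← ha_def]
        ring
      rw [Real.cosh_eq, ← habs]
      have h1 : exp (2 * κ * (π - ℓ₃)) ≤ exp |2 * κ * (π - ℓ₃)| :=
        Real.exp_le_exp.2 (le_abs_self _)
      have h2 : exp (-(2 * κ * (π - ℓ₃))) ≤ exp |2 * κ * (π - ℓ₃)| :=
        Real.exp_le_exp.2 (neg_le_abs _)
      linarith
    have hE : 0 < exp (2 * a * κ) := Real.exp_pos _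
    have he' : 0 < exp (-(2 * π * κ)) := Real.exp_pos _
    have h25 : (κ^2 * ℓ^2 + 1)^2 ≤ 25 * (κ^2 * ℓ^2 - 3)^2 := by nlinarith
    have hFu : 2 * (κ^2 * ℓ^2 + 1)^2 ≤ exp (2 * (π - a) * κ) * (κ^2 * ℓ^2 - 3)^2 := by
      nlinarith [mul_nonneg (by linarith : (0:ℝ) ≤ exp (2 * (π - a) * κ) - 50)
        (sq_nonneg (κ^2 * ℓ^2 - 3))]
    have hA : 2 * (κ^2 * ℓ^2 + 1)^2 * cosh (2 * κ * (π - ℓ₃)) ≤ 2 * (κ^2 * ℓ^2 + 1)^2 * exp (2 * a * κ) :=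
      mul_le_mul_of_nonneg_left hcosh (by positivity)
    have hB : exp (2 * a * κ) * (2 * (κ^2 * ℓ^2 + 1)^2)
        ≤ exp (2 * a * κ) * (exp (2 * (π - a) * κ) * (κ^2 * ℓ^2 - 3)^2) :=
      mul_le_mul_of_nonneg_left hFu hE.le
    have hCnn : 0 ≤ (κ^2 * ℓ^2 + 1)^2 * exp (-(2 * π * κ)) :=
      mul_nonneg (sq_nonneg _) he'.le
    rw [hf κ, hsplit]
    nlinarith [hA, hB, hCnn]
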